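/- Let S_0, S_1 be the operators on ℓ²(ℤ) given by (S_0ξ)_{2l} = (S_0ξ)_{2l+1} = (1/√2)ξ_l and (S_1ξ)_{2l} = (1/√2)ξ_l, (S_1ξ)_{2l+1} = −(1/√2)ξ_l for l ∈ ℤ (these are the Haar filter operators with coefficients a_0 = a_1 = 1, b_0 = 1, b_1 = −1). Then the closed subspace H_0 = { ξ ∈ ℓ²(ℤ) : ξ_k = 0 for all k < 0 } satisfies S_0H_0 ⊆ H_0, S_1H_0 ⊆ H_0, S_0*H_0 ⊆ H_0 and S_1*H_0 ⊆ H_0, and {0} ⊊ H_0 ⊊ ℓ²(ℤ); consequently the Haar representation of the Cuntz relations on ℓ²(ℤ) is reducible. -/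

import Mathlib

open MeasureTheory Complex Real
open scoped ComplexConjugate

noncomputable section

local notation "ℓ2" => lp (fun _ : ℤ => ℂ) 2

lemma aux_single_apply (i j : ℤ) (c : ℂ) :
    (lp.single 2 i c : ∀ _ : ℤ, ℂ) j = if j = i then c else 0 := by
  rw [lp.single_apply]
  split_ifs with h
  · subst h; simp
  · simp [Pi.single_apply, h]

lemma aux_apply_single
    (T : ℓ2 →L[ℂ] ℓ2) (a b : ℂ)
    (hT : ∀ (ξ : ℓ2) (l : ℤ),
      (T ξ : ∀ _ : ℤ, ℂ) (2 * l) = a * ξ l ∧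
      (T ξ : ∀ _ : ℤ, ℂ) (2 * l + 1) = b * ξ l) (k : ℤ) :
    T (lp.single 2 k (1 : ℂ)) =
      a • lp.single 2 (2 * k) (1 : ℂ) + b • lp.single 2 (2 * k + 1) (1 : ℂ) := by
  apply lp.ext
  funext n
  have hrhs : ((a • lp.single 2 (2 * k) (1 : ℂ) + b • lp.single 2 (2 * k + 1) (1 : ℂ) : ℓ2)
      : ∀ _ : ℤ, ℂ) n
      = a * (lp.single 2 (2 * k) (1 : ℂ) : ∀ _ : ℤ, ℂ) n
        + b * (lp.single 2 (2 * k + 1) (1 : ℂ) : ∀ _ : ℤ, ℂ) n := by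
    simp [lp.coeFn_add, lp.coeFn_smul]
    rfl
  rw [hrhs]
  rcases Int.even_or_odd n with ⟨l, hl⟩ | ⟨l, hl⟩
  · have hn : n = 2 * l := by omega
    subst hn
    rw [(hT _ l).1, aux_single_apply, aux_single_apply, aux_single_apply]
    by_cases h : l = k
    · subst h
      rw [if_pos rfl, if_pos rfl, if_neg (by omega : ¬(2*l : ℤ) = 2*l+1)]
      ring
    · rw [if_neg h, if_neg (by omega : ¬(2*l:ℤ) = 2*k),
        if_neg (by omega : ¬(2*l:ℤ) = 2*k+1)]
      ring
  · have hn : n = 2 * l + 1 := by omega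
    subst hn
    rw [(hT _ l).2, aux_single_apply, aux_single_apply, aux_single_apply]
    by_cases h : l = k
    · subst h
      rw [if_pos rfl, if_pos rfl, if_neg (by omega : ¬(2*l+1 : ℤ) = 2*l)]
      ring
    · rw [if_neg h, if_neg (by omega : ¬(2*l+1:ℤ) = 2*k),
        if_neg (by omega : ¬(2*l+1:ℤ) = 2*k+1)]
      ring

lemma aux_eval_inner (ξ : ℓ2) (k : ℤ) :
    (ξ : ∀ _ : ℤ, ℂ) k = inner (𝕜 := ℂ) (lp.single 2 k (1 : ℂ)) ξ := by
  rw [lp.inner_single_left]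
  simp

lemma aux_adjoint_apply
    (T : ℓ2 →L[ℂ] ℓ2) (a b : ℂ)
    (hT : ∀ (ξ : ℓ2) (l : ℤ),
      (T ξ : ∀ _ : ℤ, ℂ) (2 * l) = a * ξ l ∧
      (T ξ : ∀ _ : ℤ, ℂ) (2 * l + 1) = b * ξ l) (ξ : ℓ2) (k : ℤ) :
    (ContinuousLinearMap.adjoint T ξ : ∀ _ : ℤ, ℂ) k
      = conj a * ξ (2 * k) + conj b * ξ (2 * k + 1) := by
  rw [aux_eval_inner, ContinuousLinearMap.adjoint_inner_right, aux_apply_single T a b hT k]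
  rw [inner_add_left, inner_smul_left, inner_smul_left,
    lp.inner_single_left, lp.inner_single_left]
  simp

theorem stmt11
    (S0 S1 : lp (fun _ : ℤ => ℂ) 2 →L[ℂ] lp (fun _ : ℤ => ℂ) 2)
    (hS0 : ∀ (ξ : lp (fun _ : ℤ => ℂ) 2) (l : ℤ),
      (S0 ξ : ∀ _ : ℤ, ℂ) (2 * l) = ((Real.sqrt 2 : ℂ))⁻¹ * ξ l ∧
      (S0 ξ : ∀ _ : ℤ, ℂ) (2 * l + 1) = ((Real.sqrt 2 : ℂ))⁻¹ * ξ l)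
    (hS1 : ∀ (ξ : lp (fun _ : ℤ => ℂ) 2) (l : ℤ),
      (S1 ξ : ∀ _ : ℤ, ℂ) (2 * l) = ((Real.sqrt 2 : ℂ))⁻¹ * ξ l ∧
      (S1 ξ : ∀ _ : ℤ, ℂ) (2 * l + 1) = -(((Real.sqrt 2 : ℂ))⁻¹ * ξ l))
    (H0 : Set (lp (fun _ : ℤ => ℂ) 2))
    (hH0 : H0 = {ξ : lp (fun _ : ℤ => ℂ) 2 | ∀ k : ℤ, k < 0 → ξ k = 0}) :
    IsClosed H0 ∧
    (∀ ξ ∈ H0, S0 ξ ∈ H0) ∧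
    (∀ ξ ∈ H0, S1 ξ ∈ H0) ∧
    (∀ ξ ∈ H0, ContinuousLinearMap.adjoint S0 ξ ∈ H0) ∧
    (∀ ξ ∈ H0, ContinuousLinearMap.adjoint S1 ξ ∈ H0) ∧
    (∃ ξ ∈ H0, ξ ≠ 0) ∧
    H0 ≠ Set.univ := by
  have hS1' : ∀ (ξ : ℓ2) (l : ℤ),
      (S1 ξ : ∀ _ : ℤ, ℂ) (2 * l) = ((Real.sqrt 2 : ℂ))⁻¹ * ξ l ∧
      (S1 ξ : ∀ _ : ℤ, ℂ) (2 * l + 1) = (-((Real.sqrt 2 : ℂ))⁻¹) * ξ l := by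
    intro ξ l
    refine ⟨(hS1 ξ l).1, ?_⟩
    rw [(hS1 ξ l).2]; ring
  subst hH0
  refine ⟨?_, ?_, ?_, ?_, ?_, ?_, ?_⟩
  · have : {ξ : ℓ2 | ∀ k : ℤ, k < 0 → ξ k = 0}
        = ⋂ (k : ℤ) (_ : k < 0),
            {ξ : ℓ2 | inner (𝕜 := ℂ) (lp.single 2 k (1 : ℂ)) ξ = (0 : ℂ)} := by
      ext ξ
      simp only [Set.mem_setOf_eq, Set.mem_iInter]
      constructor
      · intro h k hk; rw [← aux_eval_inner]; exact h k hk
      · intro h k hk; rw [aux_eval_inner]; exact h k hk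
    rw [this]
    refine isClosed_iInter fun k => isClosed_iInter fun hk => ?_
    exact isClosed_eq (Continuous.inner continuous_const continuous_id) continuous_const
  · intro ξ hξ n hn
    rcases Int.even_or_odd n with ⟨l, hl⟩ | ⟨l, hl⟩
    · have hn2 : n = 2 * l := by omega
      rw [hn2, (hS0 ξ l).1, hξ l (by omega), mul_zero]
    · have hn2 : n = 2 * l + 1 := by omega
      rw [hn2, (hS0 ξ l).2, hξ l (by omega), mul_zero]
  · intro ξ hξ n hn
    rcases Int.even_or_odd n with ⟨l, hl⟩ | ⟨l, hl⟩
    · have hn2 : n = 2 * l := by omega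
      rw [hn2, (hS1 ξ l).1, hξ l (by omega), mul_zero]
    · have hn2 : n = 2 * l + 1 := by omega
      rw [hn2, (hS1 ξ l).2, hξ l (by omega), mul_zero, neg_zero]
  · intro ξ hξ k hk
    rw [aux_adjoint_apply S0 _ _ hS0 ξ k, hξ (2*k) (by omega), hξ (2*k+1) (by omega)]
    ring
  · intro ξ hξ k hk
    rw [aux_adjoint_apply S1 _ _ hS1' ξ k, hξ (2*k) (by omega), hξ (2*k+1) (by omega)]
    ring
  · refine ⟨lp.single 2 (0 : ℤ) (1 : ℂ), fun k hk => by rw [aux_single_apply]; exact if_neg (by omega), ?_⟩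
    intro h
    have := congrArg (fun f : ℓ2 => (f : ∀ _ : ℤ, ℂ) 0) h
    simp [lp.single_apply_self] at this
  · intro h
    have : (lp.single 2 (-1 : ℤ) (1 : ℂ) : ℓ2) ∈
        {ξ : ℓ2 | ∀ k : ℤ, k < 0 → ξ k = 0} := h ▸ Set.mem_univ _
    have h1 := this (-1) (by omega)
    rw [aux_single_apply, if_pos rfl] at h1
    exact one_ne_zero h1
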